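/- Let L : V × V → W be isotropic with constant c. Then for any orthonormal vectors v1, v2, v3, v4 ∈ V: (1) ⟨L(v1,v1),L(v1,v2)⟩ = 0; (2) ⟨L(v1,v1),L(v2,v2)⟩ + 2⟨L(v1,v2),L(v1,v2)⟩ = c; (3) ⟨L(v1,v1),L(v2,v3)⟩ + 2⟨L(v1,v2),L(v1,v3)⟩ = 0; (4) ⟨L(v1,v2),L(v3,v4)⟩ + ⟨L(v1,v3),L(v2,v4)⟩ + ⟨L(v1,v4),L(v2,v3)⟩ = 0. -/
import Mathlib

open scoped RealInnerProductSpace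
open Module

/-- Lemma 4.4: the standard identities satisfied by an isotropic symmetric bilinear
map `L : V × V → W` with constant `c`, on orthonormal vectors `v₁, v₂, v₃, v₄`. -/
theorem stmt_6 {V W : Type*} [NormedAddCommGroup V] [InnerProductSpace ℝ V]
    [NormedAddCommGroup W] [InnerProductSpace ℝ W]
    [FiniteDimensional ℝ V] (hdim : 1 ≤ finrank ℝ V)
    (c : ℝ) (L : V →ₗ[ℝ] V →ₗ[ℝ] W)
    (hsymm : ∀ x y : V, L x y = L y x)
    (hiso : ∀ v : V, ⟪L v v, L v v⟫ = c * ⟪v, v⟫ ^ 2)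
    (v1 v2 v3 v4 : V) (hON : Orthonormal ℝ ![v1, v2, v3, v4]) :
    ⟪L v1 v1, L v1 v2⟫ = 0 ∧
    ⟪L v1 v1, L v2 v2⟫ + 2 * ⟪L v1 v2, L v1 v2⟫ = c ∧
    ⟪L v1 v1, L v2 v3⟫ + 2 * ⟪L v1 v2, L v1 v3⟫ = 0 ∧
    ⟪L v1 v2, L v3 v4⟫ + ⟪L v1 v3, L v2 v4⟫ + ⟪L v1 v4, L v2 v3⟫ = 0 := by
  -- Key polarization lemma (even part)
  have keyA : ∀ x y : V, ⟪x, y⟫ = 0 →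
      ⟪L x x, L y y⟫ + 2 * ⟪L x y, L x y⟫ = c * (⟪x, x⟫ * ⟪y, y⟫) := by
    intro x y hxy
    have h1 := hiso (x + y)
    have h2 := hiso (x - y)
    have h3 := hiso x
    have h4 := hiso y
    have hyx : ⟪y, x⟫ = (0:ℝ) := by rw [real_inner_comm]; exact hxy
    simp only [map_add, map_sub, LinearMap.add_apply, LinearMap.sub_apply,
      inner_add_left, inner_add_right, inner_sub_left, inner_sub_right, hxy, hyx,
      hsymm y x] at h1 h2
    have cAB : ⟪L x y, L x x⟫ = ⟪L x x, L x y⟫ := real_inner_comm _ _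
    have cAC : ⟪L y y, L x x⟫ = ⟪L x x, L y y⟫ := real_inner_comm _ _
    have cBC : ⟪L y y, L x y⟫ = ⟪L x y, L y y⟫ := real_inner_comm _ _
    rw [cAB, cAC, cBC] at h1 h2
    linear_combination (h1 + h2 - 2*h3 - 2*h4) / 4
  -- Key polarization lemma (odd part)
  have keyO : ∀ x y : V, ⟪x, y⟫ = 0 →
      ⟪L x x, L x y⟫ + ⟪L x y, L y y⟫ = 0 := by
    intro x y hxy
    have h1 := hiso (x + y)
    have h2 := hiso (x - y)
    have hyx : ⟪y, x⟫ = (0:ℝ) := by rw [real_inner_comm]; exact hxy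
    simp only [map_add, map_sub, LinearMap.add_apply, LinearMap.sub_apply,
      inner_add_left, inner_add_right, inner_sub_left, inner_sub_right, hxy, hyx,
      hsymm y x] at h1 h2
    have cAB : ⟪L x y, L x x⟫ = ⟪L x x, L x y⟫ := real_inner_comm _ _
    have cAC : ⟪L y y, L x x⟫ = ⟪L x x, L y y⟫ := real_inner_comm _ _
    have cBC : ⟪L y y, L x y⟫ = ⟪L x y, L y y⟫ := real_inner_comm _ _
    rw [cAB, cAC, cBC] at h1 h2
    linear_combination (h1 - h2) / 8
  -- trilinear consequence of keyA
  have keyB : ∀ x y z : V, ⟪x, y⟫ = 0 → ⟪x, z⟫ = 0 → ⟪y, z⟫ = 0 →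
      ⟪L x x, L y z⟫ + 2 * ⟪L x y, L x z⟫ = 0 := by
    intro x y z hxy hxz hyz
    have hzy : ⟪z, y⟫ = (0:ℝ) := by rw [real_inner_comm]; exact hyz
    have hp : ⟪x, y + z⟫ = (0:ℝ) := by rw [inner_add_right, hxy, hxz]; ring
    have hm : ⟪x, y - z⟫ = (0:ℝ) := by rw [inner_sub_right, hxy, hxz]; ring
    have h1 := keyA x (y + z) hp
    have h2 := keyA x (y - z) hm
    simp only [map_add, map_sub, LinearMap.add_apply, LinearMap.sub_apply,
      inner_add_left, inner_add_right, inner_sub_left, inner_sub_right, hyz, hzy,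
      hsymm z y] at h1 h2
    have c1 : ⟪L y z, L x x⟫ = ⟪L x x, L y z⟫ := real_inner_comm _ _
    have c2 : ⟪L x z, L x y⟫ = ⟪L x y, L x z⟫ := real_inner_comm _ _
    have c3 : ⟪L y y, L x x⟫ = ⟪L x x, L y y⟫ := real_inner_comm _ _
    have c4 : ⟪L z z, L x x⟫ = ⟪L x x, L z z⟫ := real_inner_comm _ _
    have c5 : ⟪L z z, L y y⟫ = ⟪L y y, L z z⟫ := real_inner_comm _ _
    rw [c2] at h1 h2
    linear_combination (h1 - h2) / 4
  -- orthonormality facts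
  have hn : ∀ i : Fin 4, ‖![v1, v2, v3, v4] i‖ = 1 := hON.1
  have ho := hON.2
  have n1 : ⟪v1, v1⟫ = (1:ℝ) := by
    have := hn 0; simp at this
    rw [real_inner_self_eq_norm_sq, this]; norm_num
  have n2 : ⟪v2, v2⟫ = (1:ℝ) := by
    have := hn 1; simp at this
    rw [real_inner_self_eq_norm_sq, this]; norm_num
  have o12 : ⟪v1, v2⟫ = (0:ℝ) := by have := ho (i := 0) (j := 1) (by decide); simpa using this
  have o13 : ⟪v1, v3⟫ = (0:ℝ) := by have := ho (i := 0) (j := 2) (by decide); simpa using this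
  have o14 : ⟪v1, v4⟫ = (0:ℝ) := by have := ho (i := 0) (j := 3) (by decide); simpa using this
  have o23 : ⟪v2, v3⟫ = (0:ℝ) := by have := ho (i := 1) (j := 2) (by decide); simpa using this
  have o24 : ⟪v2, v4⟫ = (0:ℝ) := by have := ho (i := 1) (j := 3) (by decide); simpa using this
  have o34 : ⟪v3, v4⟫ = (0:ℝ) := by have := ho (i := 2) (j := 3) (by decide); simpa using this
  refine ⟨?_, ?_, ?_, ?_⟩
  · -- part 1
    have h1 := keyO v1 v2 o12
    have ho2 : ⟪v1, (2:ℝ) • v2⟫ = (0:ℝ) := by rw [real_inner_smul_right, o12]; ring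
    have h2 := keyO v1 ((2:ℝ) • v2) ho2
    simp only [map_smul, LinearMap.smul_apply, real_inner_smul_left, real_inner_smul_right] at h2
    linarith
  · -- part 2
    have h := keyA v1 v2 o12
    rw [n1, n2] at h
    linarith
  · exact keyB v1 v2 v3 o12 o13 o23
  · -- part 4
    have hp12 : ⟪v1 + v2, v3⟫ = (0:ℝ) := by rw [inner_add_left, o13, o23]; ring
    have hm12 : ⟪v1 - v2, v3⟫ = (0:ℝ) := by rw [inner_sub_left, o13, o23]; ring
    have hp14 : ⟪v1 + v2, v4⟫ = (0:ℝ) := by rw [inner_add_left, o14, o24]; ring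
    have hm14 : ⟪v1 - v2, v4⟫ = (0:ℝ) := by rw [inner_sub_left, o14, o24]; ring
    have h1 := keyB (v1 + v2) v3 v4 hp12 hp14 o34
    have h2 := keyB (v1 - v2) v3 v4 hm12 hm14 o34
    simp only [map_add, map_sub, LinearMap.add_apply, LinearMap.sub_apply,
      inner_add_left, inner_add_right, inner_sub_left, inner_sub_right,
      hsymm v2 v1] at h1 h2
    have c2 : ⟪L v2 v3, L v1 v4⟫ = ⟪L v1 v4, L v2 v3⟫ := real_inner_comm _ _
    rw [c2] at h1 h2
    linear_combination (h1 - h2) / 4
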